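/- Let θ : D × D → R be bounded and uniformly continuous, δ ∈ (0,1), and let μ_s^n → μ_s weakly in Pr_1(D×T). Define g_n(x) = ∫ θ(x,x') 1_{[1,1+δ]}(v') μ_s^n(dx',dv') and g(x) analogously with μ_s. If the v-marginal of μ_s is absolutely continuous with respect to Lebesgue measure, then g_n → g uniformly on every compact subset of D. -/

import Mathlib

open MeasureTheory Filter
open scoped ENNReal

instance : Fact ((0:ℝ) < 2) := ⟨by norm_num⟩

noncomputable def wass1 {X : Type*} [MeasurableSpace X] [PseudoEMetricSpace X]
    (μ ν : Measure X) : ℝ≥0∞ :=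
  ⨅ π ∈ {π : Measure (X × X) | π.map Prod.fst = μ ∧ π.map Prod.snd = ν},
    ∫⁻ p, edist p.1 p.2 ∂π

/-- The arc `[1, 1+δ]` of the torus `𝕋 = ℝ/2ℤ`. -/
def torusArc (δ : ℝ) : Set (AddCircle (2:ℝ)) :=
  (fun r : ℝ => (r : AddCircle (2:ℝ))) '' Set.Icc 1 (1 + δ)

lemma torusArc_isClosed (δ : ℝ) : IsClosed (torusArc δ) := by
  have hc : Continuous (fun r : ℝ => (r : AddCircle (2:ℝ))) := continuous_quotient_mk'
  exact (isCompact_Icc.image hc).isClosed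

lemma volume_singleton_addCircle (v : AddCircle (2:ℝ)) :
    (volume : Measure (AddCircle (2:ℝ))) {v} = 0 := by
  have h := AddCircle.volume_closedBall (T := 2) (x := v) 0
  have hsub : ({v} : Set (AddCircle (2:ℝ))) ⊆ Metric.closedBall v 0 := by
    intro w hw
    simp only [Set.mem_singleton_iff] at hw
    simp [hw, Metric.mem_closedBall]
  refine le_antisymm (le_trans (measure_mono hsub) ?_) zero_le
  rw [h]; norm_num

lemma frontier_torusArc_subset (δ : ℝ) :
    frontier (torusArc δ) ⊆
      {((1:ℝ) : AddCircle (2:ℝ)), ((1 + δ : ℝ) : AddCircle (2:ℝ))} := by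
  intro v hv
  have hsub : (fun r : ℝ => (r : AddCircle (2:ℝ))) '' Set.Ioo 1 (1 + δ) ⊆ interior (torusArc δ) := by
    apply interior_maximal
    · exact Set.image_mono Set.Ioo_subset_Icc_self
    · exact QuotientAddGroup.isOpenMap_coe _ isOpen_Ioo
  have hvA : v ∈ torusArc δ := by
    have := hv.1
    rwa [(torusArc_isClosed δ).closure_eq] at this
  obtain ⟨r, hr, hrv⟩ := hvA
  have hvni : v ∉ interior (torusArc δ) := hv.2
  have hrIoo : r ∉ Set.Ioo 1 (1 + δ) := by
    intro h
    exact hvni (hsub ⟨r, h, hrv⟩)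
  rcases hr with ⟨h1, h2⟩
  rcases eq_or_lt_of_le h1 with h1' | h1'
  · left; rw [← hrv, ← h1']
  rcases eq_or_lt_of_le h2 with h2' | h2'
  · right; rw [← hrv, h2']; exact Set.mem_singleton _
  · exact absurd ⟨h1', h2'⟩ hrIoo

lemma indicator_mul_diff_bound {t1 t2 i1 i2 C e J : ℝ} (hC : 0 ≤ C)
    (ht1 : |t1| ≤ C) (hi1 : 0 ≤ i1) (hi1' : i1 ≤ 1) (hi2 : 0 ≤ i2) (hi2' : i2 ≤ 1)
    (hd : |t2 - t1| ≤ e) (hJ : i1 ≠ i2 → C ≤ J) (hJ0 : 0 ≤ J) :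
    |t2 * i2 - t1 * i1| ≤ e + J := by
  have he : 0 ≤ e := le_trans (abs_nonneg _) hd
  have key : |t2 * i2 - t1 * i1| ≤ |t2 - t1| * |i2| + |t1| * |i2 - i1| := by
    have h : t2 * i2 - t1 * i1 = (t2 - t1) * i2 + t1 * (i2 - i1) := by ring
    rw [h]
    refine (abs_add_le _ _).trans ?_
    rw [abs_mul, abs_mul]
  have hai2 : |i2| ≤ 1 := by rw [abs_of_nonneg hi2]; exact hi2'
  have h1 : |t2 - t1| * |i2| ≤ e := by
    have := mul_le_mul hd hai2 (abs_nonneg _) he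
    simpa using this
  by_cases hi : i1 = i2
  · have h0 : |t1| * |i2 - i1| = 0 := by rw [hi]; simp
    linarith
  · have hd2 : |i2 - i1| ≤ 1 := by rw [abs_le]; constructor <;> linarith
    have h2 : |t1| * |i2 - i1| ≤ J := by
      have hm := mul_le_mul ht1 hd2 (abs_nonneg _) hC
      have hCJ := hJ hi
      nlinarith [abs_nonneg t1]
    linarith

/-- If `θ : D × D → ℝ` is bounded and uniformly continuous, `δ ∈ (0,1)`, `μⁿ → μ` in
`Pr₁(D × 𝕋)`, and the `v`-marginal of `μ` is absolutely continuous, then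
`gₙ(x) = ∫ θ(x,x') 1_{[1,1+δ]}(v') μⁿ(dx',dv')` converges to the analogous `g` uniformly on
every compact subset of `D`. -/
theorem gn_tendstoUniformlyOn_compacts
    (D : Set (EuclideanSpace ℝ (Fin 3))) (hD : IsOpen D) (hDconn : IsConnected D)
    (θ : ↥D × ↥D → ℝ) (hθu : UniformContinuous θ) (Cθ : ℝ) (hθb : ∀ p, |θ p| ≤ Cθ)
    (δ : ℝ) (hδ : δ ∈ Set.Ioo (0:ℝ) 1)
    (μn : ℕ → Measure (↥D × AddCircle (2:ℝ))) (μ : Measure (↥D × AddCircle (2:ℝ)))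
    [∀ n, IsProbabilityMeasure (μn n)] [IsProbabilityMeasure μ]
    (hmom : ∀ n, ∃ z0, ∫⁻ z, edist z0 z ∂(μn n) < ⊤)
    (hmomμ : ∃ z0, ∫⁻ z, edist z0 z ∂μ < ⊤)
    (hconv : Tendsto (fun n => wass1 (μn n) μ) atTop (nhds 0))
    (hac : μ.map Prod.snd ≪ (volume : Measure (AddCircle (2:ℝ)))) :
    ∀ K : Set ↥D, IsCompact K →
      TendstoUniformlyOn
        (fun n x => ∫ z, θ (x, z.1) * (torusArc δ).indicator (fun _ => (1:ℝ)) z.2 ∂(μn n))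
        (fun x => ∫ z, θ (x, z.1) * (torusArc δ).indicator (fun _ => (1:ℝ)) z.2 ∂μ)
        atTop K := by
  intro K hK
  rw [Metric.tendstoUniformlyOn_iff]
  intro ε' hε'
  set A : Set (AddCircle (2:ℝ)) := torusArc δ with hA
  have hAclosed : IsClosed A := torusArc_isClosed δ
  have hAmeas : MeasurableSet A := hAclosed.measurableSet
  obtain ⟨x0, hx0⟩ := hDconn.nonempty
  have hC0 : 0 ≤ Cθ := (abs_nonneg _).trans (hθb (⟨x0, hx0⟩, ⟨x0, hx0⟩))
  obtain ⟨η, hη, hηθ⟩ := Metric.uniformContinuous_iff.mp hθu (ε'/4) (by positivity)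
  set c : ℝ := ε' / (8 * (Cθ + 1)) with hc
  have hcpos : 0 < c := by positivity
  set S : ℕ → Set (AddCircle (2:ℝ)) :=
    fun m => {v | Metric.infDist v A ≤ 1/(m+1)} ∩ Metric.thickening (1/(m+1)) Aᶜ with hS
  have hSmeas : ∀ m, MeasurableSet (S m) := by
    intro m
    exact ((isClosed_le (Metric.continuous_infDist_pt A) continuous_const).measurableSet).inter
      Metric.isOpen_thickening.measurableSet
  have hSanti : Antitone S := by
    intro m m' hmm' v hv
    have h1 : (1:ℝ)/(m'+1) ≤ 1/(m+1) := by
      apply one_div_le_one_div_of_le (by positivity)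
      exact_mod_cast add_le_add_left (Nat.cast_le.mpr hmm') 1
    exact ⟨le_trans hv.1 h1, Metric.thickening_mono h1 _ hv.2⟩
  have hAne : A.Nonempty := ⟨((1:ℝ) : AddCircle (2:ℝ)), ⟨1, ⟨le_refl _, by linarith [hδ.1]⟩, rfl⟩⟩
  have hSinter : (⋂ m, S m) ⊆ frontier A := by
    intro v hv
    simp only [Set.mem_iInter] at hv
    have h1 : v ∈ A := by
      have hinf : Metric.infDist v A = 0 := by
        apply le_antisymm _ Metric.infDist_nonneg
        apply le_of_forall_pos_le_add
        intro e he
        obtain ⟨k, hk⟩ := exists_nat_one_div_lt he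
        exact le_trans (hv k).1 (by linarith)
      have := (Metric.mem_closure_iff_infDist_zero hAne).mpr hinf
      rwa [hAclosed.closure_eq] at this
    have h2 : v ∈ closure Aᶜ := by
      rw [EMetric.mem_closure_iff_infEdist_zero]
      by_contra hne
      have hpos : 0 < EMetric.infEdist v Aᶜ := pos_iff_ne_zero.mpr hne
      obtain ⟨e, he0, hepos, helt⟩ := ENNReal.lt_iff_exists_real_btwn.mp hpos
      have hepos' : 0 < e := ENNReal.ofReal_pos.mp hepos
      obtain ⟨k, hk⟩ := exists_nat_one_div_lt hepos'
      have hthick := (hv k).2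
      rw [Metric.thickening, Set.mem_setOf_eq] at hthick
      have hlt : ENNReal.ofReal e < ENNReal.ofReal (1/(k+1)) := lt_trans helt hthick
      have : e < 1/(k+1) := (ENNReal.ofReal_lt_ofReal_iff (by positivity)).mp hlt
      linarith
    rw [frontier, hAclosed.closure_eq, Set.diff_eq, ← closure_compl]
    exact ⟨h1, h2⟩
  set μ2 : Measure (AddCircle (2:ℝ)) := μ.map Prod.snd with hμ2
  haveI : IsProbabilityMeasure μ2 := Measure.isProbabilityMeasure_map measurable_snd.aemeasurable
  have hfront : μ2 (frontier A) = 0 := by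
    apply hac
    apply measure_mono_null (frontier_torusArc_subset δ)
    rw [Set.insert_eq]
    exact measure_union_null (volume_singleton_addCircle _) (volume_singleton_addCircle _)
  have hSlim : Tendsto (fun m => μ2 (S m)) atTop (nhds 0) := by
    have h0 : μ2 (⋂ m, S m) = 0 := measure_mono_null hSinter hfront
    have := tendsto_measure_iInter_atTop (μ := μ2)
      (fun m => (hSmeas m).nullMeasurableSet) hSanti ⟨0, measure_ne_top _ _⟩
    rwa [h0] at this
  have hev1 : ∀ᶠ m : ℕ in atTop, (1:ℝ)/(m+1) < η :=
    tendsto_one_div_add_atTop_nhds_zero_nat.eventually_lt_const hη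
  have hev2 : ∀ᶠ m : ℕ in atTop, μ2 (S m) < ENNReal.ofReal c :=
    hSlim.eventually_lt_const (ENNReal.ofReal_pos.mpr hcpos)
  obtain ⟨m, hmη, hmS⟩ := (hev1.and hev2).exists
  set ε : ℝ := 1/(m+1) with hε
  have hεpos : 0 < ε := by positivity
  set τ : ℝ≥0∞ := ENNReal.ofReal ε * ENNReal.ofReal c with hτ
  have hτpos : 0 < τ :=
    ENNReal.mul_pos (ENNReal.ofReal_pos.mpr hεpos).ne' (ENNReal.ofReal_pos.mpr hcpos).ne'
  have hevw : ∀ᶠ n in atTop, wass1 (μn n) μ < τ := hconv.eventually_lt_const hτpos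
  filter_upwards [hevw] with n hn
  obtain ⟨π, ⟨hπ1, hπ2⟩, hπcost⟩ :
      ∃ π : Measure ((↥D × AddCircle (2:ℝ)) × (↥D × AddCircle (2:ℝ))),
      (π.map Prod.fst = μn n ∧ π.map Prod.snd = μ) ∧ ∫⁻ p, edist p.1 p.2 ∂π < τ := by
    rw [wass1] at hn
    simp only [iInf_lt_iff, Set.mem_setOf_eq] at hn
    obtain ⟨π, ⟨h1, h2⟩, hcost⟩ := hn
    exact ⟨π, ⟨h1, h2⟩, hcost⟩
  haveI : IsProbabilityMeasure π := by
    constructor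
    have h := congrArg (fun ν : Measure _ => ν Set.univ) hπ1
    simpa [Measure.map_apply measurable_fst MeasurableSet.univ] using h
  set C1 : Set ((↥D × AddCircle (2:ℝ)) × (↥D × AddCircle (2:ℝ))) :=
    {p | ENNReal.ofReal ε ≤ edist p.1 p.2} with hC1def
  set C2 : Set ((↥D × AddCircle (2:ℝ)) × (↥D × AddCircle (2:ℝ))) :=
    (fun p => p.2.2) ⁻¹' (S m) with hC2def
  have hC1meas : MeasurableSet C1 := measurableSet_le measurable_const measurable_edist
  have hC2meas : MeasurableSet C2 := (measurable_snd.comp measurable_snd) (hSmeas m)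
  have hεne : ENNReal.ofReal ε ≠ 0 := (ENNReal.ofReal_pos.mpr hεpos).ne'
  have hπC1 : (π C1).toReal ≤ c := by
    apply ENNReal.toReal_le_of_le_ofReal hcpos.le
    have h1 : π C1 ≤ (∫⁻ p, edist p.1 p.2 ∂π) / ENNReal.ofReal ε :=
      meas_ge_le_lintegral_div measurable_edist.aemeasurable hεne ENNReal.ofReal_ne_top
    have h2 : (∫⁻ p, edist p.1 p.2 ∂π) / ENNReal.ofReal ε ≤ τ / ENNReal.ofReal ε := by
      gcongr <;> exact hπcost.le
    have h3 : τ / ENNReal.ofReal ε = ENNReal.ofReal c := by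
      rw [hτ, div_eq_mul_inv, mul_assoc, ← div_eq_mul_inv]
      exact ENNReal.mul_div_cancel hεne ENNReal.ofReal_ne_top
    exact le_trans h1 (le_trans h2 h3.le)
  have hπC2 : (π C2).toReal ≤ c := by
    apply ENNReal.toReal_le_of_le_ofReal hcpos.le
    have hval : π C2 = μ2 (S m) := by
      rw [hC2def, hμ2, ← hπ2]
      rw [Measure.map_map measurable_snd measurable_snd,
        Measure.map_apply (measurable_snd.comp measurable_snd) (hSmeas m)]
      rfl
    rw [hval]; exact hmS.le
  intro x hx
  set f : ↥D × AddCircle (2:ℝ) → ℝ :=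
    fun z => θ (x, z.1) * A.indicator (fun _ => (1:ℝ)) z.2 with hf
  have hfmeas : Measurable f := by
    apply Measurable.mul
    · exact (hθu.continuous.comp (continuous_const.prodMk continuous_fst)).measurable
    · exact (measurable_const.indicator hAmeas).comp measurable_snd
  have hind01 : ∀ v, 0 ≤ A.indicator (fun _ => (1:ℝ)) v ∧ A.indicator (fun _ => (1:ℝ)) v ≤ 1 := by
    intro v
    by_cases hv : v ∈ A <;> simp [Set.indicator_of_mem, Set.indicator_of_notMem, hv]
  have hfbdd : ∀ z, |f z| ≤ Cθ := by
    intro z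
    rw [hf, abs_mul]
    have h1 : |A.indicator (fun _ => (1:ℝ)) z.2| ≤ 1 := by
      rw [abs_of_nonneg (hind01 z.2).1]; exact (hind01 z.2).2
    have := mul_le_mul (hθb (x, z.1)) h1 (abs_nonneg _) hC0
    simpa using this
  have hInt1 : ∫ z, f z ∂(μn n) = ∫ p, f p.1 ∂π := by
    rw [← hπ1, integral_map measurable_fst.aemeasurable hfmeas.aestronglyMeasurable]
  have hInt2 : ∫ z, f z ∂μ = ∫ p, f p.2 ∂π := by
    rw [← hπ2, integral_map measurable_snd.aemeasurable hfmeas.aestronglyMeasurable]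
  have hIfst : Integrable (fun p => f p.1) π :=
    ⟨(hfmeas.comp measurable_fst).aestronglyMeasurable,
      HasFiniteIntegral.of_bounded (C := Cθ) (Eventually.of_forall fun p => by
        simpa [Real.norm_eq_abs] using hfbdd p.1)⟩
  have hIsnd : Integrable (fun p => f p.2) π :=
    ⟨(hfmeas.comp measurable_snd).aestronglyMeasurable,
      HasFiniteIntegral.of_bounded (C := Cθ) (Eventually.of_forall fun p => by
        simpa [Real.norm_eq_abs] using hfbdd p.2)⟩
  set B : ((↥D × AddCircle (2:ℝ)) × (↥D × AddCircle (2:ℝ))) → ℝ :=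
    fun p => ε'/4 + C1.indicator (fun _ => 2*Cθ) p + C2.indicator (fun _ => Cθ) p with hB
  have hBInt : Integrable B π := by
    apply Integrable.add
    apply Integrable.add
    · exact integrable_const _
    · exact (integrable_const _).indicator hC1meas
    · exact (integrable_const _).indicator hC2meas
  have hpt : ∀ p, |f p.2 - f p.1| ≤ B p := by
    intro p
    have hC2ind : (0:ℝ) ≤ C2.indicator (fun _ => Cθ) p := by
      by_cases h : p ∈ C2 <;> simp [Set.indicator_of_mem, Set.indicator_of_notMem, h, hC0]
    by_cases hp : p ∈ C1
    · have habs : |f p.2 - f p.1| ≤ 2*Cθ := by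
        have := abs_sub (f p.2) (f p.1)
        linarith [hfbdd p.1, hfbdd p.2, this]
      simp only [hB]
      rw [Set.indicator_of_mem hp]
      linarith
    · have hlt : edist p.1 p.2 < ENNReal.ofReal ε := lt_of_not_ge hp
      have hdist : dist p.1 p.2 < ε := edist_lt_ofReal.mp hlt
      have hd1 : dist p.1.1 p.2.1 < ε :=
        lt_of_le_of_lt (by rw [Prod.dist_eq]; exact le_max_left _ _) hdist
      have hd2 : dist p.1.2 p.2.2 < ε :=
        lt_of_le_of_lt (by rw [Prod.dist_eq]; exact le_max_right _ _) hdist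
      have hθd : |θ (x, p.2.1) - θ (x, p.1.1)| ≤ ε'/4 := by
        have hdd : dist ((x, p.2.1) : ↥D × ↥D) (x, p.1.1) < η := by
          rw [Prod.dist_eq]
          simp only [dist_self]
          rw [max_eq_right dist_nonneg, dist_comm]
          linarith
        have h := hηθ hdd
        rw [Real.dist_eq] at h
        exact h.le
      have hJ : A.indicator (fun _ => (1:ℝ)) p.1.2 ≠ A.indicator (fun _ => (1:ℝ)) p.2.2 →
          Cθ ≤ C2.indicator (fun _ => Cθ) p := by
        intro hne
        have hbS : p.2.2 ∈ S m := by
          by_cases ha : p.1.2 ∈ A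
          · by_cases hb : p.2.2 ∈ A
            · exact absurd (by simp [Set.indicator_of_mem, ha, hb]) hne
            · exact ⟨le_trans (Metric.infDist_le_dist_of_mem ha)
                  (by rw [dist_comm]; exact hd2.le),
                Metric.self_subset_thickening hεpos _ hb⟩
          · by_cases hb : p.2.2 ∈ A
            · refine ⟨?_, ?_⟩
              · rw [Set.mem_setOf_eq, Metric.infDist_zero_of_mem hb]
                exact hεpos.le
              · rw [Metric.mem_thickening_iff]
                exact ⟨p.1.2, ha, by rw [dist_comm]; exact hd2⟩
            · exact absurd (by simp [Set.indicator_of_notMem, ha, hb]) hne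
        have hpC2 : p ∈ C2 := hbS
        rw [Set.indicator_of_mem hpC2]
      have hmain := indicator_mul_diff_bound hC0 (hθb (x, p.1.1)) (hind01 p.1.2).1
        (hind01 p.1.2).2 (hind01 p.2.2).1 (hind01 p.2.2).2 hθd hJ hC2ind
      simp only [hB, hf]
      rw [Set.indicator_of_notMem hp]
      linarith [hmain]
  have hBint_val : ∫ p, B p ∂π = ε'/4 + 2*Cθ*(π C1).toReal + Cθ*(π C2).toReal := by
    have hIc : Integrable (fun _ : ((↥D × AddCircle (2:ℝ)) × (↥D × AddCircle (2:ℝ))) => ε'/4) π :=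
      integrable_const _
    have hI1 : Integrable (C1.indicator (fun _ => 2*Cθ)) π := (integrable_const _).indicator hC1meas
    have hI2 : Integrable (C2.indicator (fun _ => Cθ)) π := (integrable_const _).indicator hC2meas
    have e1 : ∫ p, (ε'/4 + C1.indicator (fun _ => 2*Cθ) p + C2.indicator (fun _ => Cθ) p) ∂π
        = (∫ p, (ε'/4 + C1.indicator (fun _ => 2*Cθ) p) ∂π)
          + ∫ p, C2.indicator (fun _ => Cθ) p ∂π :=
      integral_add (hIc.add hI1) hI2
    have e2 : ∫ p, (ε'/4 + C1.indicator (fun _ => 2*Cθ) p) ∂π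
        = ε'/4 + (π C1).toReal * (2*Cθ) := by
      rw [integral_add hIc hI1, integral_const, integral_indicator_const _ hC1meas]
      simp [measure_univ, Measure.real]
    have e3 : ∫ p, C2.indicator (fun _ => Cθ) p ∂π = (π C2).toReal * Cθ := by
      rw [integral_indicator_const _ hC2meas]; simp [Measure.real]
    simp only [hB]
    rw [e1, e2, e3]
    ring
  have hkey : dist (∫ z, f z ∂μ) (∫ z, f z ∂(μn n)) < ε' := by
    rw [Real.dist_eq, hInt1, hInt2, ← integral_sub hIsnd hIfst]
    have hstep1 : |∫ p, (f p.2 - f p.1) ∂π| ≤ ∫ p, |f p.2 - f p.1| ∂π := by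
      simpa [Real.norm_eq_abs] using
        norm_integral_le_integral_norm (μ := π) (f := fun p => f p.2 - f p.1)
    have hstep2 : ∫ p, |f p.2 - f p.1| ∂π ≤ ∫ p, B p ∂π :=
      integral_mono (hIsnd.sub hIfst).abs hBInt hpt
    have h1 : 2*Cθ*(π C1).toReal ≤ 2*Cθ*c :=
      mul_le_mul_of_nonneg_left hπC1 (by linarith)
    have h2 : Cθ*(π C2).toReal ≤ Cθ*c := mul_le_mul_of_nonneg_left hπC2 hC0
    have h3 : 2*Cθ*c ≤ ε'/4 := by
      rw [hc, ← mul_div_assoc, div_le_div_iff₀ (by positivity) (by norm_num)]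
      nlinarith [mul_nonneg hC0 hε'.le]
    have h4 : Cθ*c ≤ ε'/8 := by
      rw [hc, ← mul_div_assoc, div_le_div_iff₀ (by positivity) (by norm_num)]
      nlinarith [mul_nonneg hC0 hε'.le]
    calc |∫ p, (f p.2 - f p.1) ∂π| ≤ ∫ p, B p ∂π := le_trans hstep1 hstep2
      _ = ε'/4 + 2*Cθ*(π C1).toReal + Cθ*(π C2).toReal := hBint_val
      _ < ε' := by linarith
  exact hkey
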